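/- arXiv:2604.19595 — 5 statements merged into one kernel-verified Lean document; each statement's English description precedes it below -/
import Mathlib

section
/- Let P ∈ C²([0,1]) and 0 < α < β < 1 be such that P' > 0 on (0,α) ∪ (β,1) and P' < 0 on (α,β), and assume P(1) > P(0). Then the set of admissible pairs {(φ_ℓ, φ_r) ∈ [0,α] × [β,1] : P(φ_ℓ) = P(φ_r)} is exactly the graph of a function η : I → [β,1], where I ⊂ [0,α] is a closed nonempty interval, η is continuous on I, of class C¹ on the interior of I, and η' > 0 on the interior of I. -/
open Set Filter MeasureTheory

noncomputable section

/-- `f` has a jump point at `ξ₀`: both one-sided limits exist, are finite, and differ. -/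
def JumpPoint (f : ℝ → ℝ) (ξ₀ : ℝ) : Prop :=
  ∃ l r : ℝ, Tendsto f (nhdsWithin ξ₀ (Iio ξ₀)) (nhds l) ∧
    Tendsto f (nhdsWithin ξ₀ (Ioi ξ₀)) (nhds r) ∧ l ≠ r

/-- The set of jump points of `f` lying in `I`. -/
def jumpSet (f : ℝ → ℝ) (I : Set ℝ) : Set ℝ := {ξ ∈ I | JumpPoint f ξ}

/-- Smooth, compactly supported test functions with support inside `I`. -/
def IsTestFun (I : Set ℝ) (ψ : ℝ → ℝ) : Prop :=
  ContDiff ℝ (⊤ : ℕ∞) ψ ∧ HasCompactSupport ψ ∧ tsupport ψ ⊆ I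

/-- A traveling-wave solution of `u_t = P(u)_{xx} + g(u)` on the open interval `I`
with speed `c` and profile `φ`: `φ` is `[0,1]`-valued, continuous on `I` except
possibly at finitely many jump points, and satisfies the weak (distributional)
formulation of `P(φ)'' + c φ' + g(φ) = 0` against all test functions. -/
structure IsTW (P g : ℝ → ℝ) (I : Set ℝ) (c : ℝ) (φ : ℝ → ℝ) : Prop where
  isOpen : IsOpen I
  ordConn : I.OrdConnected
  mapsTo : ∀ ξ ∈ I, φ ξ ∈ Icc (0:ℝ) 1
  jumps_finite : (jumpSet φ I).Finite
  cont : ContinuousOn φ (I \ jumpSet φ I)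
  weak_eq : ∀ ψ : ℝ → ℝ, IsTestFun I ψ →
    ∫ ξ in I, P (φ ξ) * iteratedDeriv 2 ψ ξ =
      c * (∫ ξ in I, φ ξ * deriv ψ ξ) - ∫ ξ in I, g (φ ξ) * ψ ξ

/-- A shock traveling wave: a traveling wave whose profile is not continuous. -/
def IsShockTW (P g : ℝ → ℝ) (I : Set ℝ) (c : ℝ) (φ : ℝ → ℝ) : Prop :=
  IsTW P g I c φ ∧ ¬ ContinuousOn φ I

/-- A wavefront: a global traveling wave with monotone non-constant profile whose
limits at `±∞` exist and are zeros of `g`. -/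
def IsWavefront (P g : ℝ → ℝ) (c : ℝ) (φ : ℝ → ℝ) : Prop :=
  IsTW P g univ c φ ∧ (Monotone φ ∨ Antitone φ) ∧ (¬ ∃ k, ∀ ξ, φ ξ = k) ∧
  ∃ l m : ℝ, Tendsto φ atBot (nhds l) ∧ Tendsto φ atTop (nhds m) ∧ g l = 0 ∧ g m = 0

/-- Condition (WF): `φ(−∞) = 1` and `φ(+∞) = 0`. -/
def CondWF (φ : ℝ → ℝ) : Prop :=
  Tendsto φ atBot (nhds 1) ∧ Tendsto φ atTop (nhds 0)

/-- A shock wavefront: a wavefront whose profile is not continuous. -/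
def IsShockWavefront (P g : ℝ → ℝ) (c : ℝ) (φ : ℝ → ℝ) : Prop :=
  IsWavefront P g c φ ∧ ¬ ContinuousOn φ univ

/-- Condition (R): `P ∈ C²[0,1]`, `g ∈ C⁰[0,1]`, and `P' = D` and `g` have
finitely many zeros in `[0,1]`. -/
def CondR (P g : ℝ → ℝ) : Prop :=
  ContDiffOn ℝ 2 P (Icc 0 1) ∧ ContinuousOn g (Icc 0 1) ∧
  {u ∈ Icc (0:ℝ) 1 | deriv P u = 0}.Finite ∧ {u ∈ Icc (0:ℝ) 1 | g u = 0}.Finite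

/-- Condition (P): the diffusivity `D = P'` is positive on `(0,α) ∪ (β,1)` and
negative on `(α,β)`. -/
def CondP (P : ℝ → ℝ) (α β : ℝ) : Prop :=
  (∀ u ∈ Ioo (0:ℝ) α ∪ Ioo β 1, 0 < deriv P u) ∧ ∀ u ∈ Ioo α β, deriv P u < 0

/-- Condition (g): `g(0) = g(1) = 0`, `g < 0` on `(0,γ)` and `g > 0` on `(γ,1)`. -/
def Condg (g : ℝ → ℝ) (γ : ℝ) : Prop :=
  g 0 = 0 ∧ g 1 = 0 ∧ (∀ u ∈ Ioo (0:ℝ) γ, g u < 0) ∧ ∀ u ∈ Ioo γ 1, 0 < g u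

/-- `φ` has exactly one jump point, located at `ξs`, with left limit `φr` and
right limit `φl`. -/
def HasSingleJump (φ : ℝ → ℝ) (ξs φl φr : ℝ) : Prop :=
  jumpSet φ univ = {ξs} ∧
  Tendsto φ (nhdsWithin ξs (Iio ξs)) (nhds φr) ∧
  Tendsto φ (nhdsWithin ξs (Ioi ξs)) (nhds φl)

/-- (Locally) absolutely continuous on `I`: an indefinite integral of a locally
integrable function. -/
def AbsContOn (F : ℝ → ℝ) (I : Set ℝ) : Prop :=
  ∃ h : ℝ → ℝ, LocallyIntegrableOn h I volume ∧
    ∀ a ∈ I, ∀ b ∈ I, F b - F a = ∫ t in a..b, h t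

/-- The real interval `(−∞, a)`, `a ∈ ℝ ∪ {±∞}`. -/
def leftRay (a : EReal) : Set ℝ := {ξ : ℝ | (ξ : EReal) < a}

/-- The real interval `(a, +∞)`, `a ∈ ℝ ∪ {±∞}`. -/
def rightRay (a : EReal) : Set ℝ := {ξ : ℝ | a < (ξ : EReal)}

/-- `φ(ξ) → L` as `ξ` tends to the right endpoint `a` of its domain. -/
def TendstoRightEnd (φ : ℝ → ℝ) (a : EReal) (L : ℝ) : Prop :=
  (a = ⊤ → Tendsto φ atTop (nhds L)) ∧
  ∀ x : ℝ, a = (x : EReal) → Tendsto φ (nhdsWithin x (Iio x)) (nhds L)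

/-- `φ(ξ) → L` as `ξ` tends to the left endpoint `a` of its domain. -/
def TendstoLeftEnd (φ : ℝ → ℝ) (a : EReal) (L : ℝ) : Prop :=
  (a = ⊥ → Tendsto φ atBot (nhds L)) ∧
  ∀ x : ℝ, a = (x : EReal) → Tendsto φ (nhdsWithin x (Ioi x)) (nhds L)

/-- A regular semi-wavefront from `1`: a regular traveling wave on `I = (−∞, a)`
with monotone non-constant profile tending to `1` at `−∞`. -/
def IsSemiWFfrom1 (P g : ℝ → ℝ) (a : EReal) (c : ℝ) (φ : ℝ → ℝ) : Prop :=
  IsTW P g (leftRay a) c φ ∧ ContinuousOn φ (leftRay a) ∧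
  (MonotoneOn φ (leftRay a) ∨ AntitoneOn φ (leftRay a)) ∧
  (¬ ∃ k, ∀ ξ ∈ leftRay a, φ ξ = k) ∧
  Tendsto φ atBot (nhds 1)

/-- A regular semi-wavefront to `0`: a regular traveling wave on `I = (a, +∞)`
with monotone non-constant profile tending to `0` at `+∞`. -/
def IsSemiWFto0 (P g : ℝ → ℝ) (a : EReal) (c : ℝ) (φ : ℝ → ℝ) : Prop :=
  IsTW P g (rightRay a) c φ ∧ ContinuousOn φ (rightRay a) ∧
  (MonotoneOn φ (rightRay a) ∨ AntitoneOn φ (rightRay a)) ∧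
  (¬ ∃ k, ∀ ξ ∈ rightRay a, φ ξ = k) ∧
  Tendsto φ atTop (nhds 0)

/-- The (set-)inverse of a continuous injective function on a compact set is
continuous on the image. -/
lemma continuousOn_inv_of_compact {s : Set ℝ} (hs : IsCompact s) {f g : ℝ → ℝ}
    (hc : ContinuousOn f s) (hinj : Set.InjOn f s)
    (hg : ∀ y ∈ f '' s, g y ∈ s ∧ f (g y) = y) :
    ContinuousOn g (f '' s) := by
  rw [continuousOn_iff_continuous_restrict, continuous_iff_isClosed]
  intro C hC
  have key : (f '' s).domRestrict g ⁻¹' C = Subtype.val ⁻¹' (f '' (C ∩ s)) := by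
    ext ⟨y, hy⟩
    simp only [Set.domRestrict, mem_preimage]
    constructor
    · intro hgy
      exact ⟨g y, ⟨hgy, (hg y hy).1⟩, (hg y hy).2⟩
    · rintro ⟨x, ⟨hxC, hxs⟩, rfl⟩
      have hx' : g (f x) = x :=
        hinj (hg _ (mem_image_of_mem f hxs)).1 hxs (hg _ (mem_image_of_mem f hxs)).2
      rwa [hx']
  rw [key]
  exact (((hs.inter_left hC).image_of_continuousOn
    (hc.mono inter_subset_right)).isClosed).preimage continuous_subtype_val

/-- **Proposition 5.7**: if `P(1) > P(0)`, the set of admissible pairs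
`{(φl, φr) ∈ [0,α] × [β,1] : P(φl) = P(φr)}` is the graph of a strictly
increasing function `η` defined on a closed nonempty interval `I ⊆ [0,α]`,
continuous on `I` and `C¹` with positive derivative on its interior. -/
theorem admissible_pairs_graph
    (P : ℝ → ℝ) (α β : ℝ)
    (h0α : 0 < α) (hαβ : α < β) (hβ1 : β < 1)
    (hP2 : ContDiffOn ℝ 2 P (Icc 0 1))
    (hpos : ∀ u ∈ Ioo (0:ℝ) α ∪ Ioo β 1, 0 < deriv P u)
    (hneg : ∀ u ∈ Ioo α β, deriv P u < 0)
    (hP10 : P 0 < P 1) :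
    ∃ (I : Set ℝ) (η : ℝ → ℝ),
      I.Nonempty ∧ IsClosed I ∧ I.OrdConnected ∧ I ⊆ Icc 0 α ∧
      (∀ u ∈ I, η u ∈ Icc β 1) ∧
      ContinuousOn η I ∧
      ContDiffOn ℝ 1 η (interior I) ∧
      (∀ u ∈ interior I, 0 < deriv η u) ∧
      (∀ φl φr : ℝ,
        (φl ∈ Icc 0 α ∧ φr ∈ Icc β 1 ∧ P φl = P φr) ↔ (φl ∈ I ∧ φr = η φl)) := by
  -- basic continuity facts
  have h01 : (0:ℝ) < 1 := by linarith
  have hPc : ContinuousOn P (Icc 0 1) := hP2.continuousOn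
  have hc0α : ContinuousOn P (Icc 0 α) := hPc.mono (Icc_subset_Icc le_rfl (by linarith))
  have hcαβ : ContinuousOn P (Icc α β) := hPc.mono (Icc_subset_Icc (by linarith) (by linarith))
  have hcβ1 : ContinuousOn P (Icc β 1) := hPc.mono (Icc_subset_Icc (by linarith) le_rfl)
  -- monotonicity
  have hm0α : StrictMonoOn P (Icc 0 α) := by
    refine strictMonoOn_of_deriv_pos (convex_Icc _ _) hc0α ?_
    rw [interior_Icc]; exact fun x hx => hpos x (Or.inl hx)
  have hmβ1 : StrictMonoOn P (Icc β 1) := by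
    refine strictMonoOn_of_deriv_pos (convex_Icc _ _) hcβ1 ?_
    rw [interior_Icc]; exact fun x hx => hpos x (Or.inr hx)
  have hAαβ : StrictAntiOn P (Icc α β) := by
    refine strictAntiOn_of_deriv_neg (convex_Icc _ _) hcαβ ?_
    rw [interior_Icc]; exact fun x hx => hneg x hx
  have hmemα : α ∈ Icc (0:ℝ) α := ⟨h0α.le, le_rfl⟩
  have hmem0 : (0:ℝ) ∈ Icc (0:ℝ) α := ⟨le_rfl, h0α.le⟩
  have hmemβ : β ∈ Icc β 1 := ⟨le_rfl, hβ1.le⟩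
  have hmem1 : (1:ℝ) ∈ Icc β 1 := ⟨hβ1.le, le_rfl⟩
  have hPβα : P β < P α := hAαβ ⟨le_rfl, hαβ.le⟩ ⟨hαβ.le, le_rfl⟩ hαβ
  have hP0α : P 0 < P α := hm0α hmem0 hmemα h0α
  have hPβ1 : P β < P 1 := hmβ1 hmemβ hmem1 hβ1
  set m : ℝ := max (P 0) (P β) with hm_def
  set M : ℝ := min (P α) (P 1) with hM_def
  have hmM : m < M := max_lt (lt_min hP0α hP10) (lt_min hPβα hPβ1)
  have hmβ : P β ≤ m := le_max_right _ _
  have hM1 : M ≤ P 1 := min_le_right _ _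
  -- endpoints a, b of the interval I
  obtain ⟨a, haI, hPa⟩ : ∃ a ∈ Icc (0:ℝ) α, P a = m :=
    intermediate_value_Icc h0α.le hc0α ⟨le_max_left _ _, max_le hP0α.le hPβα.le⟩
  obtain ⟨b, hbI, hPb⟩ : ∃ b ∈ Icc (0:ℝ) α, P b = M :=
    intermediate_value_Icc h0α.le hc0α ⟨le_min hP0α.le hP10.le, min_le_left _ _⟩
  have hab : a < b := by
    have := (hm0α.lt_iff_lt haI hbI).1 (by rw [hPa, hPb]; exact hmM)
    exact this
  have hsub : Icc a b ⊆ Icc 0 α := Icc_subset_Icc haI.1 hbI.2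
  -- the function η
  set q : ℝ → ℝ := Function.invFunOn P (Icc β 1) with hq_def
  set η : ℝ → ℝ := fun u => q (P u) with hη_def
  have hex : ∀ y ∈ Icc (P β) (P 1), ∃ v ∈ Icc β 1, P v = y := fun y hy =>
    intermediate_value_Icc hβ1.le hcβ1 hy
  have hqspec : ∀ y ∈ Icc (P β) (P 1), q y ∈ Icc β 1 ∧ P (q y) = y := fun y hy =>
    Function.invFunOn_pos (hex y hy)
  have hPuI : ∀ u ∈ Icc a b, P u ∈ Icc (P β) (P 1) := by
    intro u hu
    constructor
    · calc P β ≤ m := hmβ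
        _ = P a := hPa.symm
        _ ≤ P u := hm0α.monotoneOn (hsub (left_mem_Icc.2 hab.le)) (hsub hu) hu.1
    · calc P u ≤ P b := hm0α.monotoneOn (hsub hu) (hsub (right_mem_Icc.2 hab.le)) hu.2
        _ = M := hPb
        _ ≤ P 1 := hM1
  have hηmem : ∀ u ∈ Icc a b, η u ∈ Icc β 1 ∧ P (η u) = P u := fun u hu =>
    hqspec (P u) (hPuI u hu)
  -- continuity of η on Icc a b
  have hq_cont : ContinuousOn q (P '' Icc β 1) :=
    continuousOn_inv_of_compact isCompact_Icc hcβ1 hmβ1.injOn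
      (fun y hy => Function.invFunOn_pos (by
        obtain ⟨v, hv, hvy⟩ := hy; exact ⟨v, hv, hvy⟩))
  have himg : Icc (P β) (P 1) ⊆ P '' Icc β 1 := intermediate_value_Icc hβ1.le hcβ1
  have hη_cont : ContinuousOn η (Icc a b) := by
    refine ContinuousOn.comp hq_cont (hc0α.mono hsub) ?_
    exact fun u hu => himg (hPuI u hu)
  -- derivative of η on the interior
  have key : ∀ u ∈ Ioo a b, HasDerivAt η ((deriv P (η u))⁻¹ * deriv P u) u ∧ η u ∈ Ioo β 1 := by
    intro u hu
    have hu0α : u ∈ Ioo 0 α := ⟨lt_of_le_of_lt haI.1 hu.1, lt_of_lt_of_le hu.2 hbI.2⟩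
    have huIcc : u ∈ Icc a b := Ioo_subset_Icc_self hu
    have hPu : P u ∈ Ioo m M := by
      constructor
      · rw [← hPa]
        exact hm0α (hsub (left_mem_Icc.2 hab.le)) (hsub huIcc) hu.1
      · rw [← hPb]
        exact hm0α (hsub huIcc) (hsub (right_mem_Icc.2 hab.le)) hu.2
    have hv := hηmem u huIcc
    set v : ℝ := η u with hv_def
    have hβv : β < v := by
      rcases eq_or_lt_of_le hv.1.1 with h | h
      · exfalso
        have : P u = P β := by rw [← hv.2, ← h]
        have : P u ≤ m := this.le.trans hmβ
        exact absurd hPu.1 (not_lt.2 this)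
      · exact h
    have hv1 : v < 1 := by
      rcases eq_or_lt_of_le hv.1.2 with h | h
      · exfalso
        have : P u = P 1 := by rw [← hv.2, h]
        have : M ≤ P u := hM1.trans this.ge
        exact absurd hPu.2 (not_lt.2 this)
      · exact h
    have hv01 : v ∈ Ioo (0:ℝ) 1 := ⟨by linarith, hv1⟩
    have hu01 : u ∈ Ioo (0:ℝ) 1 := ⟨hu0α.1, by linarith [hu0α.2]⟩
    have hPv_pos : 0 < deriv P v := hpos v (Or.inr ⟨hβv, hv1⟩)
    have hdPv : HasDerivAt P (deriv P v) v :=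
      ((hP2.contDiffAt (Icc_mem_nhds hv01.1 hv01.2)).differentiableAt
        (by norm_num)).hasDerivAt
    have hdPu : HasDerivAt P (deriv P u) u :=
      ((hP2.contDiffAt (Icc_mem_nhds hu01.1 hu01.2)).differentiableAt
        (by norm_num)).hasDerivAt
    have hnhds : Icc (P β) (P 1) ∈ nhds (P u) :=
      Icc_mem_nhds (lt_of_le_of_lt hmβ hPu.1) (lt_of_lt_of_le hPu.2 hM1)
    have hq_at : ContinuousAt q (P u) :=
      (hq_cont.continuousWithinAt (himg (hPuI u huIcc))).continuousAt
        (mem_of_superset hnhds himg)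
    have hfg : ∀ᶠ y in nhds (P u), P (q y) = y := by
      filter_upwards [hnhds] with y hy
      exact (hqspec y hy).2
    have hq_deriv : HasDerivAt q (deriv P v)⁻¹ (P u) :=
      HasDerivAt.of_local_left_inverse hq_at hdPv hPv_pos.ne' hfg
    exact ⟨hq_deriv.comp u hdPu, ⟨hβv, hv1⟩⟩
  have hIoo01 : Ioo a b ⊆ Ioo (0:ℝ) 1 := fun u hu =>
    ⟨lt_of_le_of_lt haI.1 hu.1, by
      have := lt_of_lt_of_le hu.2 hbI.2; linarith⟩
  have hdPc : ContinuousOn (deriv P) (Ioo (0:ℝ) 1) :=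
    (hP2.mono Ioo_subset_Icc_self).continuousOn_deriv_of_isOpen isOpen_Ioo (by norm_num)
  have hηc_int : ContinuousOn η (Ioo a b) := fun u hu =>
    ((key u hu).1.differentiableAt.continuousAt).continuousWithinAt
  have hη_maps : ∀ u ∈ Ioo a b, η u ∈ Ioo (0:ℝ) 1 := fun u hu =>
    ⟨by have := (key u hu).2.1; linarith, (key u hu).2.2⟩
  have hF_cont : ContinuousOn (fun u => (deriv P (η u))⁻¹ * deriv P u) (Ioo a b) := by
    refine ContinuousOn.mul (ContinuousOn.inv₀ (hdPc.comp hηc_int hη_maps) ?_)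
      (hdPc.mono hIoo01)
    intro u hu
    exact (hpos (η u) (Or.inr (key u hu).2)).ne'
  refine ⟨Icc a b, η, ⟨a, left_mem_Icc.2 hab.le⟩, isClosed_Icc, ordConnected_Icc, hsub,
    fun u hu => (hηmem u hu).1, hη_cont, ?_, ?_, ?_⟩
  · -- C¹ on the interior
    rw [interior_Icc]
    rw [← zero_add (1 : WithTop ℕ∞), contDiffOn_succ_iff_deriv_of_isOpen isOpen_Ioo]
    refine ⟨fun u hu => (key u hu).1.differentiableAt.differentiableWithinAt,
      by simp, ?_⟩
    rw [contDiffOn_zero]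
    exact hF_cont.congr fun u hu => (key u hu).1.deriv
  · -- positivity of the derivative
    rw [interior_Icc]
    intro u hu
    rw [(key u hu).1.deriv]
    exact mul_pos (inv_pos.2 (hpos (η u) (Or.inr (key u hu).2)))
      (hpos u (Or.inl ⟨lt_of_le_of_lt haI.1 hu.1, lt_of_lt_of_le hu.2 hbI.2⟩))
  · -- characterization of admissible pairs
    intro φl φr
    constructor
    · rintro ⟨hl, hr, hPeq⟩
      have hPl_mem : P φl ∈ Icc m M := by
        constructor
        · refine max_le ?_ ?_
          · exact hm0α.monotoneOn hmem0 hl hl.1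
          · rw [hPeq]; exact hmβ1.monotoneOn hmemβ hr hr.1
        · refine le_min ?_ ?_
          · exact hm0α.monotoneOn hl hmemα hl.2
          · rw [hPeq]; exact hmβ1.monotoneOn hr hmem1 hr.2
      have hφlI : φl ∈ Icc a b := by
        constructor
        · exact (hm0α.le_iff_le haI hl).1 (by rw [hPa]; exact hPl_mem.1)
        · exact (hm0α.le_iff_le hl hbI).1 (by rw [hPb]; exact hPl_mem.2)
      refine ⟨hφlI, ?_⟩
      have h1 := hηmem φl hφlI
      exact hmβ1.injOn hr h1.1 (by rw [h1.2, hPeq])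
    · rintro ⟨hlI, rfl⟩
      exact ⟨hsub hlI, (hηmem φl hlI).1, ((hηmem φl hlI).2).symm⟩
end
end

section
/- Consider D(u) = D_i(1 − 4u + 3u²) + D_g(4u − 3u²) with D_i, D_g > 0 and g(u) = λ_g u(1−u) + [λ_i − λ_g − (k_i − k_g)] u(1−u)² − k_g u. Then: (1) there exist 0 < α < β < 1 with D > 0 on (0,α) ∪ (β,1) and D < 0 on (α,β) if and only if D_i > 4D_g > 0, in which case α = 2/3 − ω/3 and β = 2/3 + ω/3 with ω := √((D_i − 4D_g)/(D_i − D_g)) ∈ (0,1); (2) the reaction term g satisfies g(0) = g(1) = 0, g < 0 on (0,γ), g > 0 on (γ,1) for some γ with α < γ < β if and only if k_g = 0, λ_g > 0 and (1−ω)/(2+ω) < λ_g/(k_i − λ_i) < (1+ω)/(2−ω). -/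
open Set

noncomputable section

private lemma omega_facts (Di Dg : ℝ) (hDg : 0 < Dg) (h4 : 4 * Dg < Di)
    (ω : ℝ) (hω : ω = Real.sqrt ((Di - 4*Dg) / (Di - Dg))) :
    0 < ω ∧ ω < 1 ∧ ω^2 * (Di - Dg) = Di - 4*Dg := by
  have hDd : 0 < Di - Dg := by linarith
  have hnum : 0 < Di - 4*Dg := by linarith
  have hr : 0 < (Di - 4*Dg)/(Di - Dg) := div_pos hnum hDd
  have hr1 : (Di - 4*Dg)/(Di - Dg) < 1 := by
    rw [div_lt_one hDd]; linarith
  have hω2 : ω^2 = (Di - 4*Dg)/(Di - Dg) := by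
    rw [hω, Real.sq_sqrt hr.le]
  have hωnn : 0 ≤ ω := by rw [hω]; exact Real.sqrt_nonneg _
  refine ⟨by rw [hω]; exact Real.sqrt_pos.mpr hr, ?_, ?_⟩
  · nlinarith [hω2, hr1, hωnn]
  · rw [hω2]; field_simp

private lemma D_fact (Di Dg ω u : ℝ)
    (hω2 : ω^2 * (Di - Dg) = Di - 4*Dg) :
    Di * (1 - 4*u + 3*u^2) + Dg * (4*u - 3*u^2)
      = (Di - Dg)/3 * ((3*u-2)^2 - ω^2) := by
  linear_combination (1/3 : ℝ) * hω2

set_option maxHeartbeats 1600000 in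
/-- **Lemma 2.1**: for the Johnston–Baker–Maini–Simpson model diffusivity
`D(u) = D_i(1 − 4u + 3u²) + D_g(4u − 3u²)` and reaction
`g(u) = λ_g u(1−u) + [λ_i − λ_g − (k_i − k_g)] u(1−u)² − k_g u`:
(1) the forward–backward–forward sign pattern (P) holds for some
`0 < α < β < 1` iff `D_i > 4D_g > 0`, in which case `α = 2/3 − ω/3`,
`β = 2/3 + ω/3` with `ω = √((D_i − 4D_g)/(D_i − D_g)) ∈ (0,1)`;
(2) in that case, `g` is bistable with interior zero `γ ∈ (α,β)` iff `k_g = 0`,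
`λ_g > 0` and `(1−ω)/(2+ω) < λ_g/(k_i−λ_i) < (1+ω)/(2−ω)`. -/
theorem JBMS_model_conditions
    (Di Dg ki kg lami lamg : ℝ)
    (hDi : 0 < Di) (hDg : 0 < Dg) (hki : 0 < ki) (hkg : 0 ≤ kg)
    (hlami : 0 < lami) (hlamg : 0 ≤ lamg)
    (D g : ℝ → ℝ)
    (hD : ∀ u, D u = Di * (1 - 4*u + 3*u^2) + Dg * (4*u - 3*u^2))
    (hg : ∀ u, g u = lamg * u * (1-u) + (lami - lamg - (ki - kg)) * u * (1-u)^2 - kg * u)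
    (ω : ℝ) (hω : ω = Real.sqrt ((Di - 4*Dg) / (Di - Dg))) :
    -- (1)
    ((∃ α β : ℝ, 0 < α ∧ α < β ∧ β < 1 ∧
        (∀ u ∈ Ioo (0:ℝ) α ∪ Ioo β 1, 0 < D u) ∧
        (∀ u ∈ Ioo α β, D u < 0)) ↔ 4 * Dg < Di) ∧
    (4 * Dg < Di →
      ω ∈ Ioo (0:ℝ) 1 ∧
      (∀ u ∈ Ioo (0:ℝ) (2/3 - ω/3) ∪ Ioo (2/3 + ω/3) 1, 0 < D u) ∧
      (∀ u ∈ Ioo (2/3 - ω/3) (2/3 + ω/3), D u < 0) ∧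
      -- (2)
      ((∃ γ : ℝ, 2/3 - ω/3 < γ ∧ γ < 2/3 + ω/3 ∧
          g 0 = 0 ∧ g 1 = 0 ∧
          (∀ u ∈ Ioo (0:ℝ) γ, g u < 0) ∧ (∀ u ∈ Ioo γ 1, 0 < g u)) ↔
        (kg = 0 ∧ 0 < lamg ∧
          (1 - ω)/(2 + ω) < lamg/(ki - lami) ∧
          lamg/(ki - lami) < (1 + ω)/(2 - ω)))) := by
  have hmain : 4*Dg < Di → (0 < ω ∧ ω < 1 ∧
      (∀ u ∈ Ioo (0:ℝ) (2/3 - ω/3) ∪ Ioo (2/3 + ω/3) 1, 0 < D u) ∧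
      (∀ u ∈ Ioo (2/3 - ω/3) (2/3 + ω/3), D u < 0)) := by
    intro h4
    obtain ⟨hω0, hω1, hω2⟩ := omega_facts Di Dg hDg h4 ω hω
    have hDd : 0 < Di - Dg := by linarith
    refine ⟨hω0, hω1, ?_, ?_⟩
    · rintro u (⟨h1, h2⟩ | ⟨h1, h2⟩)
      · rw [hD u, D_fact Di Dg ω u hω2]
        apply mul_pos (by linarith)
        nlinarith [mul_pos (show (0:ℝ) < 2-3*u-ω by linarith)
          (show (0:ℝ) < 2-3*u+ω by linarith)]
      · rw [hD u, D_fact Di Dg ω u hω2]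
        apply mul_pos (by linarith)
        nlinarith [mul_pos (show (0:ℝ) < 3*u-2-ω by linarith)
          (show (0:ℝ) < 3*u-2+ω by linarith)]
    · rintro u ⟨h1, h2⟩
      rw [hD u, D_fact Di Dg ω u hω2]
      apply mul_neg_of_pos_of_neg (by linarith)
      nlinarith [mul_pos (show (0:ℝ) < ω-(3*u-2) by linarith)
        (show (0:ℝ) < ω+(3*u-2) by linarith)]
  constructor
  · constructor
    · rintro ⟨α, β, h0, hab, hb1, _, hneg⟩
      by_contra hle
      push_neg at hle
      have hm : (α+β)/2 ∈ Ioo α β := ⟨by linarith, by linarith⟩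
      have hDm := hneg _ hm
      rw [hD] at hDm
      set u := (α+β)/2 with hu
      have hu0 : 0 < u := by rw [hu]; linarith
      have hu1 : u < 1 := by rw [hu]; linarith
      nlinarith [mul_nonneg hDi.le (sq_nonneg (2-3*u)),
        mul_nonneg (mul_nonneg (show (0:ℝ) ≤ 4*Dg - Di by linarith) hu0.le)
          (show (0:ℝ) ≤ 4 - 3*u by linarith)]
    · intro h4
      obtain ⟨hω0, hω1, hpos, hneg⟩ := hmain h4
      exact ⟨2/3 - ω/3, 2/3 + ω/3, by linarith, by linarith, by linarith, hpos, hneg⟩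
  · intro h4
    obtain ⟨hω0, hω1, hpos, hneg⟩ := hmain h4
    refine ⟨⟨hω0, hω1⟩, hpos, hneg, ?_⟩
    have hα0 : (0:ℝ) < 2/3 - ω/3 := by linarith
    have hβ1 : 2/3 + ω/3 < 1 := by linarith
    constructor
    · rintro ⟨γ, hαγ, hγβ, hg0, hg1, hgneg, hgpos⟩
      have hγ0 : 0 < γ := by linarith
      have hγ1 : γ < 1 := by linarith
      have hkg0 : kg = 0 := by
        have h1 : lamg * 1 * (1-1) + (lami - lamg - (ki - kg)) * 1 * (1-1)^2 - kg * 1 = 0 := by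
          rw [← hg]; exact hg1
        linear_combination -h1
      have hfac : ∀ u, g u = u * (1-u) * ((ki + lamg - lami)*u - (ki - lami)) := by
        intro u; rw [hg u, hkg0]; ring
      -- sample points
      have h1 := hgneg (γ/2) ⟨by linarith, by linarith⟩
      rw [hfac] at h1
      have h2 := hgpos ((γ+1)/2) ⟨by linarith, by linarith⟩
      rw [hfac] at h2
      have hp1 : (0:ℝ) < γ/2 * (1 - γ/2) :=
        mul_pos (by linarith) (by linarith)
      have hp2 : (0:ℝ) < (γ+1)/2 * (1 - (γ+1)/2) :=
        mul_pos (by linarith) (by linarith)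
      have hf1 : (ki + lamg - lami)*(γ/2) - (ki - lami) < 0 := by
        by_contra hc
        push_neg at hc
        linarith [mul_nonneg hp1.le hc]
      have hf2 : 0 < (ki + lamg - lami)*((γ+1)/2) - (ki - lami) := by
        by_contra hc
        push_neg at hc
        linarith [mul_nonpos_iff.mpr (Or.inl ⟨hp2.le, hc⟩)]
      have hC : 0 < ki + lamg - lami := by linarith [hf1, hf2]
      have hK : 0 < ki - lami := by linarith [mul_pos hC hγ0, hf1]
      have hlg : 0 < lamg := by
        linarith [mul_pos hC (show (0:ℝ) < 1 - (γ+1)/2 by linarith)]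
      -- γ is the zero of the linear factor
      have hCγ : (ki + lamg - lami) * γ = ki - lami := by
        by_contra hne
        rcases lt_or_gt_of_ne hne with hlt | hgt
        · -- γ < γ₀ := (ki-lami)/C ; pick u between
          have hγ₀1 : (ki - lami)/(ki + lamg - lami) < 1 := by
            rw [div_lt_one hC]; linarith
          have hγlt : γ < (ki - lami)/(ki + lamg - lami) := by
            rw [lt_div_iff₀ hC]; linarith
          set u := (γ + (ki - lami)/(ki + lamg - lami))/2 with hu
          have hγu : γ < u := by rw [hu]; linarith
          have hu1 : u < 1 := by rw [hu]; linarith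
          have hu0 : 0 < u := lt_trans hγ0 hγu
          have hult : u < (ki - lami)/(ki + lamg - lami) := by rw [hu]; linarith
          rw [lt_div_iff₀ hC] at hult
          have hpr := hgpos u ⟨hγu, hu1⟩
          rw [hfac] at hpr
          have hCu : (ki + lamg - lami)*u - (ki - lami) < 0 := by linarith
          linarith [mul_neg_of_pos_of_neg
            (mul_pos hu0 (show (0:ℝ) < 1-u by linarith)) hCu]
        · have hγ₀0 : 0 < (ki - lami)/(ki + lamg - lami) := div_pos hK hC
          have hγgt : (ki - lami)/(ki + lamg - lami) < γ := by
            rw [div_lt_iff₀ hC]; linarith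
          set u := ((ki - lami)/(ki + lamg - lami) + γ)/2 with hu
          have huγ : u < γ := by rw [hu]; linarith
          have hu0 : 0 < u := by rw [hu]; linarith
          have hu1 : u < 1 := lt_trans huγ hγ1
          have hugt : (ki - lami)/(ki + lamg - lami) < u := by rw [hu]; linarith
          rw [div_lt_iff₀ hC] at hugt
          have hpr := hgneg u ⟨hu0, huγ⟩
          rw [hfac] at hpr
          have hCu : 0 < (ki + lamg - lami)*u - (ki - lami) := by linarith
          linarith [mul_pos (mul_pos hu0 (show (0:ℝ) < 1-u by linarith)) hCu]
      refine ⟨hkg0, hlg, ?_, ?_⟩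
      · rw [div_lt_div_iff₀ (by linarith) hK]
        linarith [mul_lt_mul_of_pos_left hγβ hC]
      · rw [div_lt_div_iff₀ hK (by linarith)]
        linarith [mul_lt_mul_of_pos_left hαγ hC]
    · rintro ⟨hkg0, hlg, hlo, hhi⟩
      have hK : 0 < ki - lami := by
        by_contra hc
        push_neg at hc
        have hnp : lamg/(ki - lami) ≤ 0 := by
          rcases hc.lt_or_eq with h' | h'
          · exact (div_neg_of_pos_of_neg hlg h').le
          · rw [h', div_zero]
        have hlopos : 0 < (1 - ω)/(2 + ω) := div_pos (by linarith) (by linarith)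
        linarith
      have hC : 0 < ki + lamg - lami := by linarith
      have hlo' : (1 - ω) * (ki - lami) < lamg * (2 + ω) := by
        rw [div_lt_div_iff₀ (by linarith) hK] at hlo; linarith
      have hhi' : lamg * (2 - ω) < (1 + ω) * (ki - lami) := by
        rw [div_lt_div_iff₀ hK (by linarith)] at hhi; linarith
      set γ := (ki - lami)/(ki + lamg - lami) with hγdef
      have hCγ : γ * (ki + lamg - lami) = ki - lami := div_mul_cancel₀ _ hC.ne'
      have hαγ : 2/3 - ω/3 < γ := by
        rw [hγdef, lt_div_iff₀ hC]; linarith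
      have hγβ : γ < 2/3 + ω/3 := by
        rw [hγdef, div_lt_iff₀ hC]; linarith
      have hγ1 : γ < 1 := by linarith
      have hfac : ∀ u, g u = u * (1-u) * ((ki + lamg - lami)*u - (ki - lami)) := by
        intro u; rw [hg u, hkg0]; ring
      refine ⟨γ, hαγ, hγβ, by rw [hg]; ring, by rw [hg, hkg0]; ring, ?_, ?_⟩
      · rintro u ⟨hu0, huγ⟩
        have hu1 : u < 1 := lt_trans huγ hγ1
        rw [hfac]
        have hfactor : (ki + lamg - lami)*u - (ki - lami) < 0 := by
          linarith [mul_lt_mul_of_pos_left huγ hC]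
        exact mul_neg_of_pos_of_neg (mul_pos hu0 (by linarith)) hfactor
      · rintro u ⟨hγu, hu1⟩
        have hu0 : 0 < u := by linarith
        rw [hfac]
        have hfactor : 0 < (ki + lamg - lami)*u - (ki - lami) := by
          linarith [mul_lt_mul_of_pos_left hγu hC]
        exact mul_pos (mul_pos hu0 (by linarith)) hfactor
end
end

section
/- Let ω ∈ (0,1) and define P(u) := u³ − 2u² + ((4−ω²)/3)u, α := (2−ω)/3, β := (2+ω)/3, Δ_u := −3u² + 4u − 4/3 + 4ω²/3, η(u) := (2 − u + √Δ_u)/2, and I_ω as in the context. Then: (1) I_ω is a nonempty closed subinterval of [0,α]; (2) for every u ∈ I_ω one has Δ_u ≥ 0, η(u) ∈ [β,1], and P(η(u)) = P(u); (3) η is strictly increasing on I_ω, with η(I_ω) = [β, β + ω/3] if ω ∈ (0,1/2] and η(I_ω) = [β, 1] if ω ∈ (1/2,1); (4) conversely, if u ∈ [0,α], v ∈ [β,1] and P(u) = P(v), then u ∈ I_ω and v = η(u). -/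
open Set

noncomputable section

lemma eta_aux (ω : ℝ) (hω0 : 0 < ω) (hω1 : ω < 1)
    (P : ℝ → ℝ) (hP : ∀ u, P u = u^3 - 2*u^2 + ((4 - ω^2)/3)*u)
    (Δ : ℝ → ℝ) (hΔ : ∀ u, Δ u = -3*u^2 + 4*u - 4/3 + 4*ω^2/3)
    (η : ℝ → ℝ) (hη : ∀ u, η u = (2 - u + Real.sqrt (Δ u))/2)
    (b : ℝ) (hab : (2-2*ω)/3 ≤ b) (hbα : b ≤ (2-ω)/3)
    (hbq : ∀ u, (2-2*ω)/3 ≤ u → u ≤ b → 0 ≤ u^2 - u + (1-ω^2)/3)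
    (hbq2 : ∀ u, (2-2*ω)/3 ≤ u → u ≤ (2-ω)/3 → 0 ≤ u^2 - u + (1-ω^2)/3 → u ≤ b) :
    ((Icc ((2-2*ω)/3) b).Nonempty ∧ IsClosed (Icc ((2-2*ω)/3) b) ∧
      (Icc ((2-2*ω)/3) b).OrdConnected ∧ Icc ((2-2*ω)/3) b ⊆ Icc 0 ((2-ω)/3)) ∧
    (∀ u ∈ Icc ((2-2*ω)/3) b, 0 ≤ Δ u ∧ η u ∈ Icc ((2+ω)/3) 1 ∧ P (η u) = P u) ∧
    (StrictMonoOn η (Icc ((2-2*ω)/3) b) ∧ η '' Icc ((2-2*ω)/3) b = Icc ((2+ω)/3) (η b)) ∧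
    (∀ u ∈ Icc (0:ℝ) ((2-ω)/3), ∀ v ∈ Icc ((2+ω)/3) 1, P u = P v → u ∈ Icc ((2-2*ω)/3) b ∧ v = η u) := by
  have hΔnn : ∀ u ∈ Icc ((2-2*ω)/3) b, 0 ≤ Δ u := by
    rintro u ⟨h1, h2⟩
    rw [hΔ]
    nlinarith [mul_nonneg (sub_nonneg.2 h1) (show (0:ℝ) ≤ (2+ω)/3 - u by linarith),
      sq_nonneg (u - (2-2*ω)/3)]
  have hu0 : ∀ u ∈ Icc ((2-2*ω)/3) b, 0 < u := by
    rintro u ⟨h1, _⟩; linarith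
  have hsle : ∀ u ∈ Icc ((2-2*ω)/3) b, Real.sqrt (Δ u) ≤ u := by
    intro u hu
    have h1 : Δ u ≤ u^2 := by rw [hΔ]; nlinarith [hbq u hu.1 hu.2]
    calc Real.sqrt (Δ u) ≤ Real.sqrt (u^2) := Real.sqrt_le_sqrt h1
    _ = u := Real.sqrt_sq (le_of_lt (hu0 u hu))
  have hsge : ∀ u ∈ Icc ((2-2*ω)/3) b, u - (2-2*ω)/3 ≤ Real.sqrt (Δ u) := by
    intro u hu
    have h1 : (u - (2-2*ω)/3)^2 ≤ Δ u := by
      rw [hΔ]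
      nlinarith [mul_nonneg (sub_nonneg.2 hu.1) (show (0:ℝ) ≤ (2+ω)/3 - u by
        have := hu.2; linarith)]
    calc u - (2-2*ω)/3 = Real.sqrt ((u - (2-2*ω)/3)^2) :=
          (Real.sqrt_sq (by linarith [hu.1])).symm
    _ ≤ _ := Real.sqrt_le_sqrt h1
  have hsle2 : ∀ u ∈ Icc ((2-2*ω)/3) b, Real.sqrt (Δ u) ≤ 2 - 3*u := by
    intro u hu
    have hua : u ≤ (2-ω)/3 := le_trans hu.2 hbα
    have h1 : Δ u ≤ (2-3*u)^2 := by
      rw [hΔ]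
      nlinarith [mul_nonneg (show (0:ℝ) ≤ 2/3 - ω/3 - u by linarith)
        (show (0:ℝ) ≤ 2/3 + ω/3 - u by linarith)]
    calc Real.sqrt (Δ u) ≤ Real.sqrt ((2-3*u)^2) := Real.sqrt_le_sqrt h1
    _ = 2 - 3*u := Real.sqrt_sq (by linarith)
  have hslt : ∀ u ∈ Icc ((2-2*ω)/3) b, u < (2-ω)/3 → Real.sqrt (Δ u) < 2 - 3*u := by
    intro u hu hlt
    have h1 : Δ u < (2-3*u)^2 := by
      rw [hΔ]
      nlinarith [mul_pos (show (0:ℝ) < 2/3 - ω/3 - u by linarith)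
        (show (0:ℝ) < 2/3 + ω/3 - u by linarith)]
    calc Real.sqrt (Δ u) < Real.sqrt ((2-3*u)^2) := Real.sqrt_lt_sqrt (hΔnn u hu) h1
    _ = 2 - 3*u := Real.sqrt_sq (by linarith)
  have hmono : StrictMonoOn η (Icc ((2-2*ω)/3) b) := by
    intro u hu u' hu' hlt
    have hs2 : Real.sqrt (Δ u)^2 = -3*u^2+4*u-4/3+4*ω^2/3 := by
      rw [Real.sq_sqrt (hΔnn u hu), hΔ]
    have hs'2 : Real.sqrt (Δ u')^2 = -3*u'^2+4*u'-4/3+4*ω^2/3 := by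
      rw [Real.sq_sqrt (hΔnn u' hu'), hΔ]
    set s := Real.sqrt (Δ u) with hsdef
    set s' := Real.sqrt (Δ u') with hs'def
    have hs0 : 0 ≤ s := Real.sqrt_nonneg _
    have hs'0 : 0 ≤ s' := Real.sqrt_nonneg _
    have h1 : s < 2 - 3*u := hslt u hu (lt_of_lt_of_le hlt (le_trans hu'.2 hbα))
    have h2 : s' ≤ 2 - 3*u' := hsle2 u' hu'
    have hprod : s'^2 - s^2 = (u'-u)*(4-3*u-3*u') := by linear_combination hs'2 - hs2
    have h3 : 0 < s' := by nlinarith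
    have hsum : s + s' < 4 - 3*u - 3*u' := by linarith
    have key : (u' - u) * (s' + s) < (s' - s) * (s' + s) := by nlinarith
    have := lt_of_mul_lt_mul_right key (by linarith : (0:ℝ) ≤ s' + s)
    rw [hη, hη]
    rw [← hsdef, ← hs'def]
    linarith
  have hηa : η ((2-2*ω)/3) = (2+ω)/3 := by
    rw [hη]
    have h0 : Δ ((2-2*ω)/3) = 0 := by rw [hΔ]; ring
    rw [h0, Real.sqrt_zero]; ring
  constructor
  · exact ⟨nonempty_Icc.2 hab, isClosed_Icc, ordConnected_Icc,
      Icc_subset_Icc (by linarith) hbα⟩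
  refine ⟨?_, ⟨hmono, ?_⟩, ?_⟩
  · -- part (2)
    intro u hu
    refine ⟨hΔnn u hu, ⟨?_, ?_⟩, ?_⟩
    · rw [hη]; have := hsge u hu; linarith
    · rw [hη]; have := hsle u hu; linarith
    · rw [hη, hP, hP]
      have hs2 : Real.sqrt (Δ u)^2 = -3*u^2+4*u-4/3+4*ω^2/3 := by
        rw [Real.sq_sqrt (hΔnn u hu), hΔ]
      set s := Real.sqrt (Δ u)
      linear_combination (((2-u+s)/2 - u)/4) * hs2
  · -- image
    have hcont : ContinuousOn η (Icc ((2-2*ω)/3) b) := by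
      have he : (fun u => (2 - u + Real.sqrt (-3*u^2+4*u-4/3+4*ω^2/3))/2) = η := by
        funext u; rw [hη, hΔ]
      rw [← he]
      fun_prop
    apply Subset.antisymm
    · rintro y ⟨x, hx, rfl⟩
      constructor
      · rw [← hηa]
        exact hmono.monotoneOn (left_mem_Icc.2 hab) hx hx.1
      · exact hmono.monotoneOn hx (right_mem_Icc.2 hab) hx.2
    · have h := intermediate_value_Icc hab hcont
      rwa [hηa] at h
  · -- part (4)
    rintro u ⟨hu0', huα⟩ v ⟨hvβ, hv1⟩ hPuv
    rw [hP, hP] at hPuv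
    have hvu : 0 < v - u := by linarith
    have hQ0 : (v-u) * (u^2 + u*v + v^2 - 2*u - 2*v + (4-ω^2)/3) = 0 := by
      linear_combination -hPuv
    have hQ : u^2 + u*v + v^2 - 2*u - 2*v + (4-ω^2)/3 = 0 :=
      (mul_eq_zero.1 hQ0).resolve_left (ne_of_gt hvu)
    have hkey : Δ u = (2*v+u-2)^2 := by rw [hΔ]; linear_combination (-4)*hQ
    have hΔpos : 0 ≤ Δ u := hkey ▸ sq_nonneg _
    have hua : (2-2*ω)/3 ≤ u := by
      rw [hΔ] at hΔpos
      by_contra h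
      push_neg at h
      have hp := mul_pos (by linarith : (0:ℝ) < (2-2*ω)/3 - u)
        (by linarith : (0:ℝ) < (2+2*ω)/3 - u)
      have hid : -3*(((2-2*ω)/3 - u)*((2+2*ω)/3 - u)) = -3*u^2+4*u-4/3+4*ω^2/3 := by ring
      linarith
    have hw0 : 0 ≤ 2*v+u-2 := by linarith only [hvβ, hua]
    have hsv : Real.sqrt (Δ u) = 2*v+u-2 := by rw [hkey, Real.sqrt_sq hw0]
    have hvη : v = η u := by rw [hη, hsv]; ring
    have hub : u ≤ b := by
      apply hbq2 u hua huα
      have h4 : 2*v+u-2 ≤ u := by linarith only [hv1]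
      have h5 : (2*v+u-2)^2 ≤ u^2 := pow_le_pow_left₀ hw0 h4 2
      rw [hΔ] at hkey
      linarith only [hkey, h5]
    exact ⟨⟨hua, hub⟩, hvη⟩

/-- **Proposition 2.2 (admissible jumps for the cubic potential)**: with
`P(u) = u³ − 2u² + ((4−ω²)/3)u`, `α = (2−ω)/3`, `β = (2+ω)/3`,
`Δ_u = −3u² + 4u − 4/3 + 4ω²/3`, `η(u) = (2 − u + √Δ_u)/2` and `I_ω` as
specified: `I_ω` is a nonempty closed subinterval of `[0,α]`; for `u ∈ I_ω`,
`Δ_u ≥ 0`, `η(u) ∈ [β,1]` and `P(η(u)) = P(u)`; `η` is strictly increasing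
on `I_ω` with image `[β, β + ω/3]` if `ω ≤ 1/2` and `[β,1]` if `ω > 1/2`;
conversely every solution of `P(u) = P(v)`, `u ∈ [0,α]`, `v ∈ [β,1]` is of
this form. -/
theorem eta_admissible_pairs_cubic
    (ω : ℝ) (hω : ω ∈ Ioo (0:ℝ) 1)
    (α β : ℝ) (hα : α = (2 - ω)/3) (hβ : β = (2 + ω)/3)
    (P : ℝ → ℝ) (hP : ∀ u, P u = u^3 - 2*u^2 + ((4 - ω^2)/3)*u)
    (Δ : ℝ → ℝ) (hΔ : ∀ u, Δ u = -3*u^2 + 4*u - 4/3 + 4*ω^2/3)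
    (η : ℝ → ℝ) (hη : ∀ u, η u = (2 - u + Real.sqrt (Δ u))/2)
    (Iω : Set ℝ)
    (hIω : (ω ≤ 1/2 → Iω = Icc (α - ω/3) α) ∧
      (1/2 < ω → Iω = Icc (α - ω/3) (1/2 - Real.sqrt (4*ω^2 - 1)/(2*Real.sqrt 3)))) :
    -- (1)
    (Iω.Nonempty ∧ IsClosed Iω ∧ Iω.OrdConnected ∧ Iω ⊆ Icc 0 α) ∧
    -- (2)
    (∀ u ∈ Iω, 0 ≤ Δ u ∧ η u ∈ Icc β 1 ∧ P (η u) = P u) ∧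
    -- (3)
    (StrictMonoOn η Iω ∧
      (ω ≤ 1/2 → η '' Iω = Icc β (β + ω/3)) ∧
      (1/2 < ω → η '' Iω = Icc β 1)) ∧
    -- (4)
    (∀ u ∈ Icc (0:ℝ) α, ∀ v ∈ Icc β 1, P u = P v → u ∈ Iω ∧ v = η u) := by
  obtain ⟨hω0, hω1⟩ := hω
  subst hα
  subst hβ
  rcases le_or_gt ω (1/2) with hc | hc
  · -- case ω ≤ 1/2 : b = α
    have hIcc : Iω = Icc ((2-2*ω)/3) ((2-ω)/3) := by
      rw [hIω.1 hc]; congr 1; ring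
    obtain ⟨H1, H2, ⟨H3a, H3b⟩, H4⟩ :=
      eta_aux ω hω0 hω1 P hP Δ hΔ η hη ((2-ω)/3) (by linarith) le_rfl
        (fun u h1 h2 => by
          nlinarith [sq_nonneg (u - 1/2),
            mul_nonneg (by linarith : (0:ℝ) ≤ 1/2 - ω) (by linarith : (0:ℝ) ≤ 1/2 + ω)])
        (fun u h1 h2 h3 => h2)
    have hηb : η ((2-ω)/3) = (2+ω)/3 + ω/3 := by
      rw [hη]
      have h1 : Δ ((2-ω)/3) = ω^2 := by rw [hΔ]; ring
      rw [h1, Real.sqrt_sq hω0.le]; ring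
    rw [hIcc]
    refine ⟨H1, H2, ⟨H3a, fun _ => ?_, fun h => absurd hc (not_le.2 h)⟩, H4⟩
    rw [H3b, hηb]
  · -- case 1/2 < ω
    have hr0 : 0 ≤ Real.sqrt (4*ω^2-1) := Real.sqrt_nonneg _
    have hr2 : Real.sqrt (4*ω^2-1)^2 = 4*ω^2-1 := Real.sq_sqrt (by nlinarith)
    have hs30 : 0 < Real.sqrt 3 := Real.sqrt_pos.2 (by norm_num)
    have hs32 : Real.sqrt 3^2 = 3 := Real.sq_sqrt (by norm_num)
    set r := Real.sqrt (4*ω^2-1) with hrdef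
    set s3 := Real.sqrt 3 with hs3def
    set b : ℝ := 1/2 - r/(2*s3) with hbdef
    clear_value r s3 b
    have hdiv : r/(2*s3) = s3*r/6 := by
      rw [div_eq_div_iff (by positivity) (by norm_num)]
      linear_combination (-2*r) * hs32
    have hmul : s3 * r = Real.sqrt (3*(4*ω^2-1)) := by
      rw [hrdef, hs3def]; exact (Real.sqrt_mul (by norm_num) _).symm
    have hub' : s3 * r ≤ 4*ω - 1 := by
      rw [hmul]
      calc Real.sqrt (3*(4*ω^2-1)) ≤ Real.sqrt ((4*ω-1)^2) :=
            Real.sqrt_le_sqrt (by nlinarith)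
      _ = 4*ω - 1 := Real.sqrt_sq (by linarith)
    have hlb' : 2*ω - 1 ≤ s3 * r := by
      rw [hmul]
      calc 2*ω - 1 = Real.sqrt ((2*ω-1)^2) := (Real.sqrt_sq (by linarith)).symm
      _ ≤ Real.sqrt (3*(4*ω^2-1)) := Real.sqrt_le_sqrt (by nlinarith)
    have hab : (2-2*ω)/3 ≤ b := by rw [hbdef, hdiv]; linarith
    have hbα : b ≤ (2-ω)/3 := by rw [hbdef, hdiv]; linarith
    have hbhalf : b ≤ 1/2 := by
      have : 0 ≤ r/(2*s3) := by positivity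
      rw [hbdef]; linarith
    have hb2 : b^2 - b + (1-ω^2)/3 = 0 := by
      have h : 2*s3*b = s3 - r := by
        rw [hbdef]; field_simp
      have h2 : 4*s3^2*b^2 = s3^2 - 2*(s3*r) + r^2 := by
        linear_combination (2*s3*b + s3 - r) * h
      have h3 : s3*r = 3 - 6*b := by
        linear_combination s3*h + (1 - 2*b)*hs32
      linear_combination (1/12)*h2 - (1/6)*h3 + (-(b^2)/3 + 1/12)*hs32 + (1/12)*hr2
    have hIcc : Iω = Icc ((2-2*ω)/3) b := by
      rw [hIω.2 hc]; congr 1; ring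
    obtain ⟨H1, H2, ⟨H3a, H3b⟩, H4⟩ :=
      eta_aux ω hω0 hω1 P hP Δ hΔ η hη b hab hbα
        (fun u h1 h2 => by
          nlinarith [mul_nonneg (by linarith : (0:ℝ) ≤ b - u)
            (by linarith : (0:ℝ) ≤ 1 - b - u)])
        (fun u h1 h2 h3 => by
          by_contra h
          push_neg at h
          nlinarith [mul_pos (by linarith : (0:ℝ) < u - b)
            (by linarith : (0:ℝ) < 1 - b - u)])
    have hηb : η b = 1 := by
      have hΔb : Δ b = b^2 := by rw [hΔ]; linear_combination (-4)*hb2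
      rw [hη, hΔb, Real.sqrt_sq (by linarith : (0:ℝ) ≤ b)]
      ring
    rw [hIcc]
    refine ⟨H1, H2, ⟨H3a, fun h => absurd hc (not_lt.2 h), fun _ => ?_⟩, H4⟩
    rw [H3b, hηb]
end
end

section
/- Let ω ∈ (0,1) and define D(u) := 3u² − 4u + (4−ω²)/3 (so D = P'), with η and I_ω as in the context. Then for u ∈ I_ω the equation D(u) = D(η(u)) holds if and only if u = 2/3 − ω/√3; moreover the point 2/3 − ω/√3 belongs to I_ω if and only if ω ∈ (0, 1/√3]. Consequently, if ω ∈ (0, 1/√3] there is exactly one u ∈ I_ω with D(u) = D(η(u)), and if ω ∈ (1/√3, 1) there is none. -/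
open Set

noncomputable section

set_option maxHeartbeats 1000000 in
/-- **Proposition 2.3 (continuous-diffusivity rule for the cubic model)**: with
`D(u) = 3u² − 4u + (4−ω²)/3`, `η` and `I_ω` as specified, for `u ∈ I_ω` one has
`D(u) = D(η(u))` iff `u = 2/3 − ω/√3`; this point lies in `I_ω` iff
`ω ≤ 1/√3`. Hence for `ω ∈ (0, 1/√3]` there is exactly one `u ∈ I_ω` with
`D(u) = D(η(u))`, and for `ω ∈ (1/√3, 1)` there is none. -/
theorem continuous_diffusivity_rule_cubic
    (ω : ℝ) (hω : ω ∈ Ioo (0:ℝ) 1)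
    (α β : ℝ) (hα : α = (2 - ω)/3) (hβ : β = (2 + ω)/3)
    (D : ℝ → ℝ) (hD : ∀ u, D u = 3*u^2 - 4*u + (4 - ω^2)/3)
    (Δ : ℝ → ℝ) (hΔ : ∀ u, Δ u = -3*u^2 + 4*u - 4/3 + 4*ω^2/3)
    (η : ℝ → ℝ) (hη : ∀ u, η u = (2 - u + Real.sqrt (Δ u))/2)
    (Iω : Set ℝ)
    (hIω : (ω ≤ 1/2 → Iω = Icc (α - ω/3) α) ∧
      (1/2 < ω → Iω = Icc (α - ω/3) (1/2 - Real.sqrt (4*ω^2 - 1)/(2*Real.sqrt 3)))) :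
    (∀ u ∈ Iω, (D u = D (η u) ↔ u = 2/3 - ω/Real.sqrt 3)) ∧
    ((2/3 - ω/Real.sqrt 3) ∈ Iω ↔ ω ≤ 1/Real.sqrt 3) ∧
    (ω ≤ 1/Real.sqrt 3 → ∃! u : ℝ, u ∈ Iω ∧ D u = D (η u)) ∧
    (1/Real.sqrt 3 < ω → ¬ ∃ u : ℝ, u ∈ Iω ∧ D u = D (η u)) := by
  obtain ⟨hω0, hω1⟩ := hω
  set s3 := Real.sqrt 3 with hs3def
  have hs3 : s3^2 = 3 := Real.sq_sqrt (by norm_num)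
  have hs3pos : 0 < s3 := Real.sqrt_pos.2 (by norm_num)
  have hs3lt : s3 < 2 := by nlinarith
  have hs3ge : 3/2 ≤ s3 := by nlinarith
  set t := ω / s3 with htdef
  have htpos : 0 < t := div_pos hω0 hs3pos
  have hts : t * s3 = ω := div_mul_cancel₀ ω hs3pos.ne'
  have ht2 : t^2 = ω^2/3 := by
    rw [htdef, div_pow, hs3]
  have htlow : ω/3 < t := by nlinarith
  have hthigh : t ≤ 2*ω/3 := by nlinarith
  -- bounds on members of Iω
  have hmem : ∀ u ∈ Iω, (2-2*ω)/3 ≤ u ∧ u ≤ 2/3 - ω/6 := by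
    intro u hu
    rcases le_or_gt ω (1/2) with h | h
    · rw [hIω.1 h, hα, mem_Icc] at hu
      constructor
      · linarith [hu.1]
      · linarith [hu.2]
    · rw [hIω.2 h, hα, mem_Icc] at hu
      have hr : (0:ℝ) ≤ Real.sqrt (4*ω^2-1) / (2*s3) := by positivity
      constructor
      · linarith [hu.1]
      · linarith [hu.2]
  have hΔpos : ∀ u ∈ Iω, 0 ≤ Δ u := by
    intro u hu
    obtain ⟨h1, h2⟩ := hmem u hu
    rw [hΔ]
    nlinarith [mul_nonneg (by linarith : (0:ℝ) ≤ u - (2-2*ω)/3)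
      (by linarith : (0:ℝ) ≤ (2+2*ω)/3 - u)]
  -- main characterization
  have key : ∀ u ∈ Iω, (D u = D (η u) ↔ u = 2/3 - t) := by
    intro u hu
    obtain ⟨h1, h2⟩ := hmem u hu
    have hΔu : 0 ≤ Δ u := hΔpos u hu
    set s := Real.sqrt (Δ u) with hsdef
    have hs0 : 0 ≤ s := Real.sqrt_nonneg _
    have hs2 : s^2 = Δ u := Real.sq_sqrt hΔu
    rw [hΔ] at hs2
    have hηu : η u = (2 - u + s)/2 := by rw [hη]
    constructor
    · intro hDeq
      rw [hD u, hD (η u), hηu] at hDeq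
      have hfac : (3*u - 2 - s) * (3*u + 3*s - 2) = 0 := by linear_combination (4:ℝ) * hDeq
      have hneg : 3*u - 2 - s < 0 := by linarith
      have h2f : 3*u + 3*s - 2 = 0 := by
        rcases mul_eq_zero.1 hfac with h | h
        · linarith
        · exact h
      have hsval : s = 2/3 - u := by linarith
      rw [hsval] at hs2
      have hq : (u - 2/3 + t) * (u - 2/3 - t) = 0 := by
        linear_combination (1/4 : ℝ) * hs2 - ht2
      have hlt : u - 2/3 - t < 0 := by linarith
      rcases mul_eq_zero.1 hq with h | h
      · linarith
      · linarith
    · intro huval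
      have hΔval : Δ u = t^2 := by
        rw [hΔ, huval]; linear_combination (-4:ℝ) * ht2
      have hsval : s = t := by
        rw [hsdef, hΔval, Real.sqrt_sq htpos.le]
      rw [hD u, hD (η u), hηu, hsval, huval]
      ring
  -- membership of the special point
  have hmem2 : (2/3 - t) ∈ Iω ↔ ω ≤ 1/s3 := by
    rcases le_or_gt ω (1/2) with h | h
    · rw [hIω.1 h, hα, mem_Icc]
      constructor
      · intro _
        rw [le_div_iff₀ hs3pos]
        nlinarith
      · intro _
        constructor
        · linarith
        · linarith
    · rw [hIω.2 h, hα, mem_Icc]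
      have h41 : (0:ℝ) ≤ 4*ω^2 - 1 := by nlinarith
      set r := Real.sqrt (4*ω^2 - 1) with hrdef
      have hr0 : 0 ≤ r := Real.sqrt_nonneg _
      have hr2 : r^2 = 4*ω^2 - 1 := Real.sq_sqrt h41
      have hA0 : 0 ≤ 2*ω - s3/3 := by linarith
      constructor
      · intro hm
        have hup := hm.2
        have h' : r / (2*s3) ≤ t - 1/6 := by linarith
        rw [div_le_iff₀ (by positivity : (0:ℝ) < 2*s3)] at h'
        have hrle : r ≤ 2*ω - s3/3 := by nlinarith
        have hsq : r * r ≤ (2*ω - s3/3) * (2*ω - s3/3) :=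
          mul_self_le_mul_self hr0 hrle
        rw [le_div_iff₀ hs3pos]
        nlinarith
      · intro hle
        rw [le_div_iff₀ hs3pos] at hle
        have hrle : r ≤ 2*ω - s3/3 := by
          rw [hrdef]
          calc Real.sqrt (4*ω^2 - 1) ≤ Real.sqrt ((2*ω - s3/3)^2) :=
                Real.sqrt_le_sqrt (by nlinarith)
            _ = 2*ω - s3/3 := Real.sqrt_sq hA0
        have h' : r / (2*s3) ≤ t - 1/6 := by
          rw [div_le_iff₀ (by positivity : (0:ℝ) < 2*s3)]
          nlinarith
        constructor
        · linarith
        · linarith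
  refine ⟨key, hmem2, ?_, ?_⟩
  · intro hle
    refine ⟨2/3 - t, ⟨hmem2.2 hle, (key _ (hmem2.2 hle)).2 rfl⟩, ?_⟩
    intro v ⟨hv1, hv2⟩
    exact (key v hv1).1 hv2
  · rintro hlt ⟨u, hu1, hu2⟩
    have hu := (key u hu1).1 hu2
    rw [hu] at hu1
    exact absurd (hmem2.1 hu1) (not_le.2 hlt)
end
end

section
/- Let ω ∈ (0,1) and define the jump function j(u) := η(u) − u = 1 − (3/2)u + √Δ_u/2 for u ∈ I_ω, with η, Δ_u, I_ω as in the context. If ω ∈ (0, 1/√3], then j attains its maximum over I_ω at u = 2/3 − ω/√3 (the unique point of I_ω where D(u) = D(η(u))). If ω ∈ (1/√3, 1), then j attains its maximum over I_ω at the right endpoint of I_ω, namely u = 1/2 − √(4ω²−1)/(2√3). -/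
open Set

noncomputable section

lemma le_of_sq_le_sq'' (a b : ℝ) (hb : 0 ≤ b) (h : a^2 ≤ b^2) (ha : 0 ≤ a) : a ≤ b := by
  nlinarith

lemma sqrt_le_of_sq' (a b : ℝ) (hb : 0 ≤ b) (h : a ≤ b^2) : Real.sqrt a ≤ b := by
  calc Real.sqrt a ≤ Real.sqrt (b^2) := Real.sqrt_le_sqrt h
  _ = b := Real.sqrt_sq hb

set_option maxHeartbeats 2000000 in
/-- **Proposition 2.4 (maximal jump)**: with `j(u) = η(u) − u` on `I_ω`:
if `ω ≤ 1/√3`, the jump attains its maximum over `I_ω` at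
`u = 2/3 − ω/√3` — the unique point of `I_ω` where `D(u) = D(η(u))`; if
`ω > 1/√3`, it attains its maximum at the right endpoint
`u = 1/2 − √(4ω²−1)/(2√3)` of `I_ω`. -/
theorem maximal_jump_cubic
    (ω : ℝ) (hω : ω ∈ Ioo (0:ℝ) 1)
    (α β : ℝ) (hα : α = (2 - ω)/3) (hβ : β = (2 + ω)/3)
    (D : ℝ → ℝ) (hD : ∀ u, D u = 3*u^2 - 4*u + (4 - ω^2)/3)
    (Δ : ℝ → ℝ) (hΔ : ∀ u, Δ u = -3*u^2 + 4*u - 4/3 + 4*ω^2/3)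
    (η : ℝ → ℝ) (hη : ∀ u, η u = (2 - u + Real.sqrt (Δ u))/2)
    (j : ℝ → ℝ) (hj : ∀ u, j u = η u - u)
    (Iω : Set ℝ)
    (hIω : (ω ≤ 1/2 → Iω = Icc (α - ω/3) α) ∧
      (1/2 < ω → Iω = Icc (α - ω/3) (1/2 - Real.sqrt (4*ω^2 - 1)/(2*Real.sqrt 3)))) :
    (ω ≤ 1/Real.sqrt 3 →
      (2/3 - ω/Real.sqrt 3) ∈ Iω ∧
      (∀ u ∈ Iω, j u ≤ j (2/3 - ω/Real.sqrt 3)) ∧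
      D (2/3 - ω/Real.sqrt 3) = D (η (2/3 - ω/Real.sqrt 3)) ∧
      (∀ u ∈ Iω, D u = D (η u) → u = 2/3 - ω/Real.sqrt 3)) ∧
    (1/Real.sqrt 3 < ω →
      (1/2 - Real.sqrt (4*ω^2 - 1)/(2*Real.sqrt 3)) ∈ Iω ∧
      ∀ u ∈ Iω, j u ≤ j (1/2 - Real.sqrt (4*ω^2 - 1)/(2*Real.sqrt 3))) := by
  obtain ⟨hω0, hω1⟩ := hω
  have hs0 : (0:ℝ) < Real.sqrt 3 := Real.sqrt_pos.mpr (by norm_num)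
  have hs2 : (Real.sqrt 3)^2 = 3 := Real.sq_sqrt (by norm_num)
  set s := Real.sqrt 3 with hsdef
  have hp0 : 0 ≤ Real.sqrt (4*ω^2 - 1) := Real.sqrt_nonneg _
  set p := Real.sqrt (4*ω^2 - 1) with hpdef
  clear_value s p
  have hs1 : 1 < s := by nlinarith
  have hslt2 : s < 2 := by nlinarith
  have hs32 : 3/2 < s := by nlinarith
  have hdiv : ω / s = ω * s / 3 := by
    rw [div_eq_div_iff hs0.ne' (by norm_num : (3:ℝ) ≠ 0)]
    linear_combination (-ω) * hs2
  have hpdiv : p / (2*s) = p * s / 6 := by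
    rw [div_eq_div_iff (by positivity : (2*s) ≠ 0) (by norm_num : (6:ℝ) ≠ 0)]
    linear_combination (-2*p) * hs2
  -- bounds valid on all of Iω
  have hIb : ∀ u ∈ Iω, (2 - 2*ω)/3 ≤ u ∧ u < 2/3 := by
    intro u hu
    rcases le_or_gt ω (1/2) with h12 | h12
    · rw [hIω.1 h12, hα] at hu
      obtain ⟨h1, h2⟩ := hu
      exact ⟨by linarith, by linarith⟩
    · rw [hIω.2 h12, hα] at hu
      obtain ⟨h1, h2⟩ := hu
      have hq : 0 ≤ p / (2*s) := by positivity
      exact ⟨by linarith, by linarith⟩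
  -- Δ ≥ 0 on Iω
  have hΔpos : ∀ u ∈ Iω, 0 ≤ Δ u := by
    intro u hu
    obtain ⟨h1, h2⟩ := hIb u hu
    rw [hΔ]
    linarith [mul_nonneg (by linarith : (0:ℝ) ≤ u - (2-2*ω)/3)
      (by linarith : (0:ℝ) ≤ (2+2*ω)/3 - u)]
  -- the maximizer value in case 1
  have hu0eq : (2:ℝ)/3 - ω/s = 2/3 - ω*s/3 := by rw [hdiv]
  have hΔu0 : Δ (2/3 - ω/s) = (ω*s/3)^2 := by
    rw [hΔ, hu0eq]
    linear_combination (-(4*ω^2)/9) * hs2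
  have hsqrtu0 : Real.sqrt (Δ (2/3 - ω/s)) = ω*s/3 := by
    rw [hΔu0]; exact Real.sqrt_sq (by positivity)
  have hju0 : j (2/3 - ω/s) = 2*ω*s/3 := by
    rw [hj, hη, hsqrtu0, hu0eq]; ring
  constructor
  · -- case ω ≤ 1/√3
    intro hωs
    have hωs1 : ω * s ≤ 1 := by
      rw [le_div_iff₀ hs0] at hωs; linarith
    refine ⟨?_, ?_, ?_, ?_⟩
    · -- membership
      rcases le_or_gt ω (1/2) with h12 | h12
      · rw [hIω.1 h12, hα, hu0eq]
        constructor
        · linarith [mul_nonneg hω0.le (by linarith : (0:ℝ) ≤ 2 - s)]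
        · linarith [mul_nonneg hω0.le (by linarith : (0:ℝ) ≤ s - 1)]
      · rw [hIω.2 h12, hα, hu0eq, hpdiv]
        have hp2 : p^2 = 4*ω^2 - 1 := by rw [hpdef]; exact Real.sq_sqrt (by nlinarith)
        have hps2 : (p*s)^2 = 12*ω^2 - 3 := by
          rw [mul_pow, hp2, hs2]; ring
        have hws2 : (ω*s)^2 = 3*ω^2 := by rw [mul_pow, hs2]; ring
        have hb : (0:ℝ) < 2*ω*s - 1 := by
          linarith [mul_pos (by linarith : (0:ℝ) < ω - 1/2) (by linarith : (0:ℝ) < s - 3/2)]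
        have hkey : p * s ≤ 2*ω*s - 1 := by
          refine le_of_sq_le_sq'' _ _ hb.le ?_ (mul_nonneg hp0 hs0.le)
          rw [hps2]; nlinarith [hωs1, hws2]
        constructor
        · linarith [mul_nonneg hω0.le (by linarith : (0:ℝ) ≤ 2 - s)]
        · linarith
    · -- maximum
      intro u hu
      obtain ⟨h1, h2⟩ := hIb u hu
      have hR0 : (0:ℝ) ≤ 4*ω*s/3 + 3*u - 2 := by
        linarith [mul_nonneg hω0.le (by linarith : (0:ℝ) ≤ 4*s - 6)]
      have hid : (4*ω*s/3 + 3*u - 2)^2 - Δ u = 4/9*(3*ω + 3*s*u - 2*s)^2 := by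
        rw [hΔ]; linear_combination (16*ω^2/9 - 4*u^2 - 16/9 + 16*u/3) * hs2
      have hΔle : Δ u ≤ (4*ω*s/3 + 3*u - 2)^2 := by
        linarith [hid, sq_nonneg (3*ω + 3*s*u - 2*s)]
      have hsq : Real.sqrt (Δ u) ≤ 4*ω*s/3 + 3*u - 2 :=
        sqrt_le_of_sq' _ _ hR0 hΔle
      rw [hj, hη, hju0]
      linarith
    · -- D equality at the maximizer
      have hηu0 : η (2/3 - ω/s) = 2/3 + ω*s/3 := by
        rw [hη, hsqrtu0, hu0eq]; ring
      rw [hηu0, hD, hD, hu0eq]; ring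
    · -- uniqueness
      intro u hu hDu
      obtain ⟨h1, h2⟩ := hIb u hu
      have hΔ0 : 0 ≤ Δ u := hΔpos u hu
      rw [hD, hD, hη] at hDu
      set S := Real.sqrt (Δ u) with hSdef
      have hS0 : 0 ≤ S := Real.sqrt_nonneg _
      have hS2 : S^2 = Δ u := Real.sq_sqrt hΔ0
      have hfac : (3*u - 2 - S)*(3*u - 2 + 3*S) = 0 := by linear_combination 4*hDu
      have h3 : 3*u - 2 + 3*S = 0 := by
        rcases mul_eq_zero.mp hfac with h | h
        · linarith
        · exact h
      have hSval : S = (2 - 3*u)/3 := by linarith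
      rw [hSval, hΔ] at hS2
      have hfac2 : (3*u - 2 + ω*s)*(3*u - 2 - ω*s) = 0 := by
        linear_combination (9/4)*hS2 + (-(ω^2))*hs2
      have h4 : 3*u - 2 + ω*s = 0 := by
        rcases mul_eq_zero.mp hfac2 with h | h
        · exact h
        · linarith [mul_pos hω0 hs0]
      rw [hu0eq]; linarith
  · -- case ω > 1/√3
    intro hωs
    have hωs1 : 1 < ω * s := by
      rw [div_lt_iff₀ hs0] at hωs; linarith
    have h12 : 1/2 < ω := by
      linarith [mul_lt_mul_of_pos_left hslt2 hω0]
    have hp2 : p^2 = 4*ω^2 - 1 := by rw [hpdef]; exact Real.sq_sqrt (by nlinarith)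
    have hps2 : (p*s)^2 = 12*ω^2 - 3 := by
      rw [mul_pow, hp2, hs2]; ring
    have hps3 : p * s ≤ 3 := by
      refine le_of_sq_le_sq'' _ _ (by norm_num) ?_ (mul_nonneg hp0 hs0.le)
      rw [hps2]; nlinarith [sq_nonneg (1 - ω), hω0, hω1]
    have hps1 : 1 ≤ p * s := by
      refine le_of_sq_le_sq'' _ _ (mul_nonneg hp0 hs0.le) ?_ (by norm_num)
      have hws2 : (ω*s)^2 = 3*ω^2 := by rw [mul_pow, hs2]; ring
      rw [hps2]; linarith [hωs1, hws2, sq_nonneg (ω*s - 1)]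
    have hps4 : p * s ≤ 4*ω - 1 := by
      refine le_of_sq_le_sq'' _ _ (by linarith) ?_ (mul_nonneg hp0 hs0.le)
      rw [hps2]; linarith [sq_nonneg (ω - 1)]
    have hps6 : 6*ω - 3 ≤ p * s := by
      refine le_of_sq_le_sq'' _ _ (mul_nonneg hp0 hs0.le) ?_ (by linarith)
      rw [hps2]
      linarith [mul_nonneg (by linarith : (0:ℝ) ≤ 2*ω - 1) (by linarith : (0:ℝ) ≤ 1 - ω)]
    have hr0 : (0:ℝ) ≤ 1/2 - p*s/6 := by linarith
    have hΔr : Δ (1/2 - p*s/6) = (1/2 - p*s/6)^2 := by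
      rw [hΔ]
      linear_combination (-(s^2)/9) * hp2 + (-(4*ω^2-1)/9) * hs2
    have hsqrtr : Real.sqrt (Δ (1/2 - p*s/6)) = 1/2 - p*s/6 := by
      rw [hΔr]; exact Real.sqrt_sq hr0
    have harg : (1:ℝ)/2 - p/(2*s) = 1/2 - p*s/6 := by rw [hpdiv]
    have hjr : j (1/2 - p/(2*s)) = 1/2 + p*s/6 := by
      rw [harg, hj, hη, hsqrtr]; ring
    rw [hIω.2 h12, hα]
    constructor
    · -- membership
      rw [harg]
      exact ⟨by linarith, le_rfl⟩
    · -- maximum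
      intro u hu
      obtain ⟨h1, h2⟩ := hu
      rw [harg] at h2
      have h1' : (2 - 2*ω)/3 ≤ u := by linarith
      have hu13 : u ≤ 1/3 := by linarith
      have hR0 : (0:ℝ) ≤ 3*u - 2*(1/2 - p*s/6) := by linarith
      have hid2 : (3*u - 2*(1/2 - p*s/6))^2 - Δ u
          = 12*((1/2 - p*s/6) - u)*(1/3 - u) := by
        rw [hΔ]; linear_combination (1/9) * hps2
      have hΔle : Δ u ≤ (3*u - 2*(1/2 - p*s/6))^2 := by
        linarith [hid2, mul_nonneg (by linarith : (0:ℝ) ≤ (1/2 - p*s/6) - u)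
          (by linarith : (0:ℝ) ≤ 1/3 - u)]
      have hsq : Real.sqrt (Δ u) ≤ 3*u - 2*(1/2 - p*s/6) :=
        sqrt_le_of_sq' _ _ hR0 hΔle
      rw [hj, hη, hjr]
      linarith
end
end
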